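/- For b > 0 and 0 < ε sufficiently small, the 2×2 matrices P = ±[[1, b],[0, 1]] and P = ±[[1, 0],[−b, 1]] satisfy sgn M_ε(P) = 0. -/

import Mathlib

open Matrix BigOperators

noncomputable section

/-- The standard symplectic matrix `J = [[0, -I],[I, 0]]`. -/
def Jmat (ι : Type*) [Fintype ι] [DecidableEq ι] : Matrix (ι ⊕ ι) (ι ⊕ ι) ℝ :=
  Matrix.fromBlocks 0 (-1) 1 0

/-- `M` is symplectic iff `Mᵀ J M = J`. -/
def IsSymplectic {ι : Type*} [Fintype ι] [DecidableEq ι]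
    (M : Matrix (ι ⊕ ι) (ι ⊕ ι) ℝ) : Prop :=
  Mᵀ * Jmat ι * M = Jmat ι

/-- The matrix `M_ε(P)`. -/
def Mmat {ι : Type*} [Fintype ι] [DecidableEq ι] (ε : ℝ)
    (P : Matrix (ι ⊕ ι) (ι ⊕ ι) ℝ) : Matrix (ι ⊕ ι) (ι ⊕ ι) ℝ :=
  Pᵀ * Matrix.fromBlocks (Real.sin (2*ε) • 1) (-(Real.cos (2*ε)) • 1)
      (-(Real.cos (2*ε)) • 1) (-(Real.sin (2*ε)) • 1) * P
    + Matrix.fromBlocks (Real.sin (2*ε) • 1) (Real.cos (2*ε) • 1)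
      (Real.cos (2*ε) • 1) (-(Real.sin (2*ε)) • 1)

/-- `N = diag(-I, I)`. -/
def Nmat (ι : Type*) [Fintype ι] [DecidableEq ι] : Matrix (ι ⊕ ι) (ι ⊕ ι) ℝ :=
  Matrix.fromBlocks (-1) 0 0 1

/-- `m⁺(F)`: dimension of a maximal subspace on which the quadratic form of `F`
is positive definite. -/
def posDim {ι : Type*} [Fintype ι] (F : Matrix ι ι ℝ) : ℕ :=
  sSup {d : ℕ | ∃ W : Submodule ℝ (ι → ℝ), Module.finrank ℝ W = d ∧
    ∀ v ∈ W, v ≠ 0 → 0 < F.mulVec v ⬝ᵥ v}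

/-- `m⁻(F)`: dimension of a maximal subspace on which the quadratic form of `F`
is negative definite. -/
def negDim {ι : Type*} [Fintype ι] (F : Matrix ι ι ℝ) : ℕ :=
  sSup {d : ℕ | ∃ W : Submodule ℝ (ι → ℝ), Module.finrank ℝ W = d ∧
    ∀ v ∈ W, v ≠ 0 → F.mulVec v ⬝ᵥ v < 0}

/-- The signature `sgn F = m⁺(F) - m⁻(F)`. -/
def signat {ι : Type*} [Fintype ι] (F : Matrix ι ι ℝ) : ℤ :=
  (posDim F : ℤ) - (negDim F : ℤ)

/-- The `⋄`-product (symplectic direct sum) of two matrices. -/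
def diamond {ι₁ ι₂ : Type*}
    (M₁ : Matrix (ι₁ ⊕ ι₁) (ι₁ ⊕ ι₁) ℝ) (M₂ : Matrix (ι₂ ⊕ ι₂) (ι₂ ⊕ ι₂) ℝ) :
    Matrix ((ι₁ ⊕ ι₂) ⊕ (ι₁ ⊕ ι₂)) ((ι₁ ⊕ ι₂) ⊕ (ι₁ ⊕ ι₂)) ℝ :=
  Matrix.fromBlocks
    (Matrix.fromBlocks (M₁.submatrix Sum.inl Sum.inl) 0 0 (M₂.submatrix Sum.inl Sum.inl))
    (Matrix.fromBlocks (M₁.submatrix Sum.inl Sum.inr) 0 0 (M₂.submatrix Sum.inl Sum.inr))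
    (Matrix.fromBlocks (M₁.submatrix Sum.inr Sum.inl) 0 0 (M₂.submatrix Sum.inr Sum.inl))
    (Matrix.fromBlocks (M₁.submatrix Sum.inr Sum.inr) 0 0 (M₂.submatrix Sum.inr Sum.inr))

end


section Aux

open Matrix

private lemma aux_posDim (F : Matrix (Fin 1 ⊕ Fin 1) (Fin 1 ⊕ Fin 1) ℝ)
    (v w : (Fin 1 ⊕ Fin 1) → ℝ) (hv : 0 < F.mulVec v ⬝ᵥ v) (hw : F.mulVec w ⬝ᵥ w < 0) :
    posDim F = 1 := by
  have hfr : Module.finrank ℝ ((Fin 1 ⊕ Fin 1) → ℝ) = 2 := by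
    simp [Module.finrank_fintype_fun_eq_card]
  have hv0 : v ≠ 0 := by rintro rfl; simp at hv
  have hw0 : w ≠ 0 := by rintro rfl; simp at hw
  have hmem : 1 ∈ {d : ℕ | ∃ W : Submodule ℝ ((Fin 1 ⊕ Fin 1) → ℝ), Module.finrank ℝ W = d ∧
      ∀ x ∈ W, x ≠ 0 → 0 < F.mulVec x ⬝ᵥ x} := by
    refine ⟨Submodule.span ℝ {v}, finrank_span_singleton hv0, ?_⟩
    intro x hx hx0
    obtain ⟨a, rfl⟩ := Submodule.mem_span_singleton.mp hx
    have ha : a ≠ 0 := by rintro rfl; simp at hx0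
    have : F.mulVec (a • v) ⬝ᵥ (a • v) = a ^ 2 * (F.mulVec v ⬝ᵥ v) := by
      rw [Matrix.mulVec_smul, smul_dotProduct, dotProduct_smul]
      simp [smul_eq_mul]; ring
    rw [this]
    positivity
  have hub : ∀ d ∈ {d : ℕ | ∃ W : Submodule ℝ ((Fin 1 ⊕ Fin 1) → ℝ), Module.finrank ℝ W = d ∧
      ∀ x ∈ W, x ≠ 0 → 0 < F.mulVec x ⬝ᵥ x}, d ≤ 1 := by
    rintro d ⟨W, hW, hp⟩
    by_contra hlt
    push_neg at hlt
    have hle : Module.finrank ℝ W ≤ 2 := hfr ▸ Submodule.finrank_le W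
    have h2 : Module.finrank ℝ W = 2 := le_antisymm hle (by omega)
    have hT : W = ⊤ := Submodule.eq_top_of_finrank_eq (by rw [h2, hfr])
    exact absurd (hp w (hT ▸ Submodule.mem_top) hw0) (not_lt.2 hw.le)
  exact le_antisymm (csSup_le ⟨1, hmem⟩ hub) (le_csSup ⟨1, hub⟩ hmem)

private lemma aux_negDim (F : Matrix (Fin 1 ⊕ Fin 1) (Fin 1 ⊕ Fin 1) ℝ)
    (v w : (Fin 1 ⊕ Fin 1) → ℝ) (hv : 0 < F.mulVec v ⬝ᵥ v) (hw : F.mulVec w ⬝ᵥ w < 0) :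
    negDim F = 1 := by
  have hfr : Module.finrank ℝ ((Fin 1 ⊕ Fin 1) → ℝ) = 2 := by
    simp [Module.finrank_fintype_fun_eq_card]
  have hv0 : v ≠ 0 := by rintro rfl; simp at hv
  have hw0 : w ≠ 0 := by rintro rfl; simp at hw
  have hmem : 1 ∈ {d : ℕ | ∃ W : Submodule ℝ ((Fin 1 ⊕ Fin 1) → ℝ), Module.finrank ℝ W = d ∧
      ∀ x ∈ W, x ≠ 0 → F.mulVec x ⬝ᵥ x < 0} := by
    refine ⟨Submodule.span ℝ {w}, finrank_span_singleton hw0, ?_⟩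
    intro x hx hx0
    obtain ⟨a, rfl⟩ := Submodule.mem_span_singleton.mp hx
    have ha : a ≠ 0 := by rintro rfl; simp at hx0
    have : F.mulVec (a • w) ⬝ᵥ (a • w) = a ^ 2 * (F.mulVec w ⬝ᵥ w) := by
      rw [Matrix.mulVec_smul, smul_dotProduct, dotProduct_smul]
      simp [smul_eq_mul]; ring
    rw [this]
    have : (0:ℝ) < a ^ 2 := by positivity
    nlinarith
  have hub : ∀ d ∈ {d : ℕ | ∃ W : Submodule ℝ ((Fin 1 ⊕ Fin 1) → ℝ), Module.finrank ℝ W = d ∧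
      ∀ x ∈ W, x ≠ 0 → F.mulVec x ⬝ᵥ x < 0}, d ≤ 1 := by
    rintro d ⟨W, hW, hp⟩
    by_contra hlt
    push_neg at hlt
    have hle : Module.finrank ℝ W ≤ 2 := hfr ▸ Submodule.finrank_le W
    have h2 : Module.finrank ℝ W = 2 := le_antisymm hle (by omega)
    have hT : W = ⊤ := Submodule.eq_top_of_finrank_eq (by rw [h2, hfr])
    exact absurd (hp v (hT ▸ Submodule.mem_top) hv0) (not_lt.2 hv.le)
  exact le_antisymm (csSup_le ⟨1, hmem⟩ hub) (le_csSup ⟨1, hub⟩ hmem)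

private lemma aux_signat (F : Matrix (Fin 1 ⊕ Fin 1) (Fin 1 ⊕ Fin 1) ℝ)
    (v w : (Fin 1 ⊕ Fin 1) → ℝ) (hv : 0 < F.mulVec v ⬝ᵥ v) (hw : F.mulVec w ⬝ᵥ w < 0) :
    signat F = 0 := by
  rw [signat, aux_posDim F v w hv hw, aux_negDim F v w hv hw]
  ring

private lemma aux_Mmat_neg {ι : Type*} [Fintype ι] [DecidableEq ι] (ε : ℝ)
    (P : Matrix (ι ⊕ ι) (ι ⊕ ι) ℝ) : Mmat ε (-P) = Mmat ε P := by
  simp [Mmat, Matrix.transpose_neg, Matrix.neg_mul, Matrix.mul_neg]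

end Aux

/-- For `b > 0` and small `ε > 0`, `sgn M_ε(P) = 0` for
`P = ±[[1,b],[0,1]]` and `P = ±[[1,0],[-b,1]]`. -/
theorem signature_shear_zero (b : ℝ) (hb : 0 < b) :
    ∃ ε₀ > 0, ∀ ε : ℝ, 0 < ε → ε < ε₀ →
      signat (Mmat ε (Matrix.fromBlocks 1 (b • 1) 0 1 :
        Matrix (Fin 1 ⊕ Fin 1) (Fin 1 ⊕ Fin 1) ℝ)) = 0 ∧
      signat (Mmat ε (-(Matrix.fromBlocks 1 (b • 1) 0 1) :
        Matrix (Fin 1 ⊕ Fin 1) (Fin 1 ⊕ Fin 1) ℝ)) = 0 ∧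
      signat (Mmat ε (Matrix.fromBlocks 1 0 (-b • 1) 1 :
        Matrix (Fin 1 ⊕ Fin 1) (Fin 1 ⊕ Fin 1) ℝ)) = 0 ∧
      signat (Mmat ε (-(Matrix.fromBlocks 1 0 (-b • 1) 1) :
        Matrix (Fin 1 ⊕ Fin 1) (Fin 1 ⊕ Fin 1) ℝ)) = 0 := by
  refine ⟨Real.arctan b⁻¹ / 2, by have h := Real.arctan_strictMono (by positivity : (0:ℝ) < b⁻¹); rw [Real.arctan_zero] at h; linarith, fun ε hε hε' => ?_⟩
  set s := Real.sin (2*ε) with hs_def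
  set c := Real.cos (2*ε) with hc_def
  have h2e : 0 < 2*ε := by linarith
  have h2lt : 2*ε < Real.arctan b⁻¹ := by linarith
  have harc : Real.arctan b⁻¹ < Real.pi / 2 := Real.arctan_lt_pi_div_two _
  have hc : 0 < c := Real.cos_pos_of_mem_Ioo ⟨by linarith [Real.pi_pos], by linarith⟩
  have hs : 0 < s := Real.sin_pos_of_pos_of_lt_pi h2e (by linarith [Real.pi_pos])
  have htan : Real.tan (2*ε) < b⁻¹ := by
    rw [← Real.tan_arctan b⁻¹]
    exact Real.tan_lt_tan_of_nonneg_of_lt_pi_div_two h2e.le harc h2lt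
  have hbs : b * s < c := by
    rw [Real.tan_eq_sin_div_cos, div_lt_iff₀ hc] at htan
    have := mul_lt_mul_of_pos_left htan hb
    rw [← mul_assoc, mul_inv_cancel₀ hb.ne', one_mul] at this
    linarith
  have hbc : 0 < b * c := mul_pos hb hc
  have hsb2 : s * b^2 < b * c := by nlinarith
  set v : (Fin 1 ⊕ Fin 1) → ℝ := Sum.elim (fun _ => 1) (fun _ => 0) with hv_def
  set w : (Fin 1 ⊕ Fin 1) → ℝ := Sum.elim (fun _ => 0) (fun _ => 1) with hw_def
  have hQ1v : (Mmat ε (Matrix.fromBlocks 1 (b • 1) 0 1 :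
      Matrix (Fin 1 ⊕ Fin 1) (Fin 1 ⊕ Fin 1) ℝ)).mulVec v ⬝ᵥ v = 2 * s := by
    simp only [hv_def, hs_def]
    simp [Mmat, Matrix.mulVec, dotProduct, Matrix.mul_apply, Fintype.sum_sum_type,
      Matrix.one_apply, Fin.sum_univ_one]
    ring
  have hQ1w : (Mmat ε (Matrix.fromBlocks 1 (b • 1) 0 1 :
      Matrix (Fin 1 ⊕ Fin 1) (Fin 1 ⊕ Fin 1) ℝ)).mulVec w ⬝ᵥ w
      = s * b^2 - 2*b*c - 2*s := by
    simp only [hw_def, hs_def, hc_def]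
    simp [Mmat, Matrix.mulVec, dotProduct, Matrix.mul_apply, Fintype.sum_sum_type,
      Matrix.one_apply, Fin.sum_univ_one]
    ring
  have hQ2v : (Mmat ε (Matrix.fromBlocks 1 0 (-b • 1) 1 :
      Matrix (Fin 1 ⊕ Fin 1) (Fin 1 ⊕ Fin 1) ℝ)).mulVec v ⬝ᵥ v
      = 2*s + 2*b*c - s * b^2 := by
    simp only [hv_def, hs_def, hc_def]
    simp [Mmat, Matrix.mulVec, dotProduct, Matrix.mul_apply, Fintype.sum_sum_type,
      Matrix.one_apply, Fin.sum_univ_one]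
    ring
  have hQ2w : (Mmat ε (Matrix.fromBlocks 1 0 (-b • 1) 1 :
      Matrix (Fin 1 ⊕ Fin 1) (Fin 1 ⊕ Fin 1) ℝ)).mulVec w ⬝ᵥ w = -(2*s) := by
    simp only [hw_def, hs_def]
    simp [Mmat, Matrix.mulVec, dotProduct, Matrix.mul_apply, Fintype.sum_sum_type,
      Matrix.one_apply, Fin.sum_univ_one]
    ring
  have hsig1 : signat (Mmat ε (Matrix.fromBlocks 1 (b • 1) 0 1 :
      Matrix (Fin 1 ⊕ Fin 1) (Fin 1 ⊕ Fin 1) ℝ)) = 0 :=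
    aux_signat _ v w (by rw [hQ1v]; linarith) (by rw [hQ1w]; nlinarith)
  have hsig2 : signat (Mmat ε (Matrix.fromBlocks 1 0 (-b • 1) 1 :
      Matrix (Fin 1 ⊕ Fin 1) (Fin 1 ⊕ Fin 1) ℝ)) = 0 :=
    aux_signat _ v w (by rw [hQ2v]; nlinarith) (by rw [hQ2w]; linarith)
  exact ⟨hsig1, by rw [aux_Mmat_neg]; exact hsig1, hsig2, by rw [aux_Mmat_neg]; exact hsig2⟩
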